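/- arXiv:1205.4340 — 3 statements merged into one kernel-verified Lean document; each statement's English description precedes it below -/
import Mathlib

section
/- For every integer n ≥ 1 and 1 ≤ k ≤ n, the following finite identity of rational functions in q holds: ∑_{j=0}^{k-1} (-1)^j (-q;q²)_j (-q^{-1};q²)_{n-j} q^{n-j} / ((q²;q²)_j (q²;q²)_{n-j}) = (-1)^{k-1} (-q;q²)_k (-q;q²)_{n-k} q^{n-k} / ((1-q^{2n})(q²;q²)_{n-k} (q²;q²)_{k-1}). -/
/-- finite q-Pochhammer symbol `(a;q)_m` in the field of rational functions -/
noncomputable def qPoch (a q : RatFunc ℚ) (m : ℕ) : RatFunc ℚ := ∏ i ∈ Finset.range m, (1 - a * q ^ i)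

namespace KeyAux

lemma qPoch_zero (a q : RatFunc ℚ) : qPoch a q 0 = 1 := by simp [qPoch]

lemma qPoch_succ (a q : RatFunc ℚ) (m : ℕ) :
    qPoch a q (m + 1) = qPoch a q m * (1 - a * q ^ m) := by
  simp [qPoch, Finset.prod_range_succ]

lemma X_pow_ne_one (m : ℕ) (hm : m ≠ 0) : (RatFunc.X : RatFunc ℚ) ^ m ≠ 1 := by
  intro h
  have h' : (Polynomial.X : Polynomial ℚ) ^ m = 1 := by
    apply RatFunc.algebraMap_injective ℚ
    simpa using h
  have := congrArg Polynomial.natDegree h'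
  simp [Polynomial.natDegree_X_pow] at this
  exact hm this

lemma X_pow_ne_neg_one (m : ℕ) : (RatFunc.X : RatFunc ℚ) ^ m ≠ -1 := by
  intro h
  have h' : (Polynomial.X : Polynomial ℚ) ^ m = -1 := by
    apply RatFunc.algebraMap_injective ℚ
    simpa using h
  have := congrArg Polynomial.natDegree h'
  simp [Polynomial.natDegree_X_pow] at this
  subst this
  simp at h'
  exact absurd h' (by norm_num)

lemma one_sub_X_pow_ne_zero (m : ℕ) (hm : m ≠ 0) : (1 : RatFunc ℚ) - RatFunc.X ^ m ≠ 0 := by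
  intro h
  exact X_pow_ne_one m hm (by linear_combination -h)

lemma one_add_X_pow_ne_zero (m : ℕ) : (1 : RatFunc ℚ) + RatFunc.X ^ m ≠ 0 := by
  intro h
  exact X_pow_ne_neg_one m (by linear_combination h)

lemma A_ne_zero (m : ℕ) : qPoch (-RatFunc.X) (RatFunc.X ^ 2) m ≠ 0 := by
  apply Finset.prod_ne_zero_iff.mpr
  intro i _
  have h : (1 : RatFunc ℚ) - -RatFunc.X * (RatFunc.X ^ 2) ^ i = 1 + RatFunc.X ^ (2 * i + 1) := by
    rw [pow_add, pow_mul]; ring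
  rw [h]
  exact one_add_X_pow_ne_zero _

lemma C_ne_zero (m : ℕ) : qPoch (RatFunc.X ^ 2) (RatFunc.X ^ 2) m ≠ 0 := by
  apply Finset.prod_ne_zero_iff.mpr
  intro i _
  have h : (1 : RatFunc ℚ) - RatFunc.X ^ 2 * (RatFunc.X ^ 2) ^ i = 1 - RatFunc.X ^ (2 * i + 2) := by
    rw [pow_add, pow_mul]; ring
  rw [h]
  exact one_sub_X_pow_ne_zero _ (by omega)

lemma B_eq (m : ℕ) :
    qPoch (-RatFunc.X⁻¹) (RatFunc.X ^ 2) (m + 1) =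
      (1 + RatFunc.X⁻¹) * qPoch (-RatFunc.X) (RatFunc.X ^ 2) m := by
  have hX : (RatFunc.X : RatFunc ℚ) ≠ 0 := RatFunc.X_ne_zero
  rw [qPoch, qPoch, Finset.prod_range_succ']
  have h0 : (1 : RatFunc ℚ) - -RatFunc.X⁻¹ * (RatFunc.X ^ 2) ^ 0 = 1 + RatFunc.X⁻¹ := by ring
  rw [h0, mul_comm]
  congr 1
  apply Finset.prod_congr rfl
  intro i _
  field_simp
  ring

end KeyAux

open KeyAux in
theorem key_induction_lemma_triangular (n k : ℕ) (hn : 1 ≤ n) (hk1 : 1 ≤ k) (hk : k ≤ n) :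
    (∑ j ∈ Finset.range k, (-1 : RatFunc ℚ) ^ j *
        qPoch (-RatFunc.X) (RatFunc.X ^ 2) j * qPoch (-RatFunc.X⁻¹) (RatFunc.X ^ 2) (n - j) *
          RatFunc.X ^ (n - j) /
            (qPoch (RatFunc.X ^ 2) (RatFunc.X ^ 2) j *
              qPoch (RatFunc.X ^ 2) (RatFunc.X ^ 2) (n - j))) =
    (-1 : RatFunc ℚ) ^ (k - 1) * qPoch (-RatFunc.X) (RatFunc.X ^ 2) k *
        qPoch (-RatFunc.X) (RatFunc.X ^ 2) (n - k) * RatFunc.X ^ (n - k) /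
      ((1 - RatFunc.X ^ (2 * n)) * qPoch (RatFunc.X ^ 2) (RatFunc.X ^ 2) (n - k) *
        qPoch (RatFunc.X ^ 2) (RatFunc.X ^ 2) (k - 1)) := by
  have hX : (RatFunc.X : RatFunc ℚ) ≠ 0 := RatFunc.X_ne_zero
  induction k, hk1 using Nat.le_induction with
  | base =>
    obtain ⟨m, rfl⟩ : ∃ m, n = m + 1 := ⟨n - 1, by omega⟩
    rw [Finset.sum_range_one]
    have e1 : m + 1 - 1 = m := by omega
    have e0 : m + 1 - 0 = m + 1 := rfl
    rw [e1, e0, B_eq, qPoch_succ (RatFunc.X ^ 2), qPoch_succ (-RatFunc.X)]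
    simp only [Nat.sub_self, qPoch_zero, one_mul, mul_one, pow_zero]
    have hCm := C_ne_zero m
    have hfm : (1 : RatFunc ℚ) - RatFunc.X ^ 2 * (RatFunc.X ^ 2) ^ m ≠ 0 := by
      have h : (1 : RatFunc ℚ) - RatFunc.X ^ 2 * (RatFunc.X ^ 2) ^ m
          = 1 - RatFunc.X ^ (2 * m + 2) := by rw [pow_add, pow_mul]; ring
      rw [h]; exact one_sub_X_pow_ne_zero _ (by omega)
    have h3 : (1 : RatFunc ℚ) - RatFunc.X ^ (2 * (m + 1)) ≠ 0 :=
      one_sub_X_pow_ne_zero _ (by omega)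
    rw [div_eq_div_iff (mul_ne_zero hCm hfm) (mul_ne_zero h3 hCm)]
    field_simp
    ring
  | succ k hk1 ih =>
    obtain ⟨m, rfl⟩ : ∃ m, n = k + 1 + m := ⟨n - (k + 1), by omega⟩
    rw [Finset.sum_range_succ, ih (by omega)]
    have e1 : k + 1 + m - k = m + 1 := by omega
    have e2 : k + 1 + m - (k + 1) = m := by omega
    have e3 : k + 1 - 1 = k := by omega
    rw [e1, e2, e3, B_eq, qPoch_succ (-RatFunc.X) _ m, qPoch_succ (-RatFunc.X) _ k,
      qPoch_succ (RatFunc.X ^ 2) _ m]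
    obtain ⟨l, rfl⟩ : ∃ l, k = l + 1 := ⟨k - 1, by omega⟩
    simp only [Nat.add_sub_cancel]
    rw [qPoch_succ (RatFunc.X ^ 2) _ l]
    have hCm := C_ne_zero m
    have hCl := C_ne_zero l
    have hfm : (1 : RatFunc ℚ) - RatFunc.X ^ 2 * (RatFunc.X ^ 2) ^ m ≠ 0 := by
      have h : (1 : RatFunc ℚ) - RatFunc.X ^ 2 * (RatFunc.X ^ 2) ^ m
          = 1 - RatFunc.X ^ (2 * m + 2) := by rw [pow_add, pow_mul]; ring
      rw [h]; exact one_sub_X_pow_ne_zero _ (by omega)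
    have hfl : (1 : RatFunc ℚ) - RatFunc.X ^ 2 * (RatFunc.X ^ 2) ^ l ≠ 0 := by
      have h : (1 : RatFunc ℚ) - RatFunc.X ^ 2 * (RatFunc.X ^ 2) ^ l
          = 1 - RatFunc.X ^ (2 * l + 2) := by rw [pow_add, pow_mul]; ring
      rw [h]; exact one_sub_X_pow_ne_zero _ (by omega)
    have h2n : (1 : RatFunc ℚ) - RatFunc.X ^ (2 * (l + 1 + 1 + m)) ≠ 0 :=
      one_sub_X_pow_ne_zero _ (by omega)
    have hb : (1 - RatFunc.X ^ (2 * (l + 1 + 1 + m))) *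
        (qPoch (RatFunc.X ^ 2) (RatFunc.X ^ 2) m * (1 - RatFunc.X ^ 2 * (RatFunc.X ^ 2) ^ m)) *
        qPoch (RatFunc.X ^ 2) (RatFunc.X ^ 2) l ≠ 0 :=
      mul_ne_zero (mul_ne_zero h2n (mul_ne_zero hCm hfm)) hCl
    have hd : qPoch (RatFunc.X ^ 2) (RatFunc.X ^ 2) l * (1 - RatFunc.X ^ 2 * (RatFunc.X ^ 2) ^ l) *
        (qPoch (RatFunc.X ^ 2) (RatFunc.X ^ 2) m * (1 - RatFunc.X ^ 2 * (RatFunc.X ^ 2) ^ m)) ≠ 0 :=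
      mul_ne_zero (mul_ne_zero hCl hfl) (mul_ne_zero hCm hfm)
    have hf : (1 - RatFunc.X ^ (2 * (l + 1 + 1 + m))) * qPoch (RatFunc.X ^ 2) (RatFunc.X ^ 2) m *
        (qPoch (RatFunc.X ^ 2) (RatFunc.X ^ 2) l * (1 - RatFunc.X ^ 2 * (RatFunc.X ^ 2) ^ l)) ≠ 0 :=
      mul_ne_zero (mul_ne_zero h2n hCm) (mul_ne_zero hCl hfl)
    rw [div_add_div _ _ hb hd, div_eq_div_iff (mul_ne_zero hb hd) hf]
    field_simp
    ring
end

section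
/- For every integer n ≥ 0, the finite identity 1 + 2 ∑_{j=1}^{n} (-1)^j q^{j²} = ∑_{j=0}^{n} (-1)^j (-1;q)_j (q;q)_n q^{(n+1)j} / ((q;q)_j (-q;q)_n) holds as an identity of rational functions in q. -/
open Finset

local notation "q" => (RatFunc.X : RatFunc ℚ)

/-- `(-1;q)_j` -/
noncomputable def Apoch (j : ℕ) : RatFunc ℚ := ∏ i ∈ Finset.range j, (1 + q ^ i)

/-- `∏_{i=j}^{n-1} (1 - q^{i+1})` -/
noncomputable def Qp (n j : ℕ) : RatFunc ℚ := ∏ i ∈ Finset.Ico j n, (1 - q ^ (i + 1))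

/-- `(-q;q)_n` -/
noncomputable def Mp (n : ℕ) : RatFunc ℚ := ∏ i ∈ Finset.range n, (1 + q ^ (i + 1))

noncomputable def Uterm (n j : ℕ) : RatFunc ℚ :=
  (-1) ^ j * Apoch j * Qp n j * q ^ ((n + 1) * j)

noncomputable def Wterm (n j : ℕ) : RatFunc ℚ :=
  (1 - q ^ j) * ((-1) ^ j * Apoch j * Qp n j * q ^ ((n + 1) * j))

lemma Apoch_succ (j : ℕ) : Apoch (j + 1) = Apoch j * (1 + q ^ j) :=
  Finset.prod_range_succ _ _

lemma Apoch_eq_two_mul (n : ℕ) : Apoch (n + 1) = 2 * Mp n := by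
  rw [Apoch, Finset.prod_range_succ', Mp]
  norm_num [mul_comm]

lemma Qp_self (n : ℕ) : Qp n n = 1 := by simp [Qp]

lemma Qp_bot {n j : ℕ} (h : j < n) : Qp n j = (1 - q ^ (j + 1)) * Qp n (j + 1) := by
  rw [Qp, Finset.prod_eq_prod_Ico_succ_bot h, Qp]

lemma Qp_top {n j : ℕ} (h : j ≤ n) : Qp (n + 1) j = Qp n j * (1 - q ^ (n + 1)) := by
  rw [Qp, Finset.prod_Ico_succ_top h, Qp]

lemma telescope_term {n j : ℕ} (h : j < n) :
    ((1 - q ^ (n + 1)) * q ^ j - (1 + q ^ (n + 1))) * Uterm n j =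
      Wterm n (j + 1) - Wterm n j := by
  rw [Uterm, Wterm, Wterm, Apoch_succ, Qp_bot h]
  have hpow : q ^ ((n + 1) * (j + 1)) = q ^ ((n + 1) * j) * q ^ (n + 1) := by
    rw [← pow_add]; ring_nf
  rw [hpow]
  ring

/-- main polynomial identity -/
lemma key (n : ℕ) :
    ∑ j ∈ Finset.range (n + 1), Uterm n j =
      (1 + 2 * ∑ j ∈ Finset.Icc 1 n, (-1 : RatFunc ℚ) ^ j * q ^ (j ^ 2)) * Mp n := by
  induction n with
  | zero => simp [Uterm, Apoch, Qp, Mp]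
  | succ n ih =>
    have hL : (1 + 2 * ∑ j ∈ Finset.Icc 1 (n + 1), (-1 : RatFunc ℚ) ^ j * q ^ (j ^ 2)) =
        (1 + 2 * ∑ j ∈ Finset.Icc 1 n, (-1 : RatFunc ℚ) ^ j * q ^ (j ^ 2)) +
          2 * ((-1) ^ (n + 1) * q ^ ((n + 1) ^ 2)) := by
      rw [Finset.sum_Icc_succ_top (by omega : 1 ≤ n + 1)]; ring
    have hM : Mp (n + 1) = Mp n * (1 + q ^ (n + 1)) := Finset.prod_range_succ _ _
    -- rewrite P(n+1)
    have hstep : ∀ j ∈ Finset.range (n + 1),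
        Uterm (n + 1) j = ((1 - q ^ (n + 1)) * q ^ j) * Uterm n j := by
      intro j hj
      rw [Finset.mem_range] at hj
      rw [Uterm, Uterm, Qp_top (by omega : j ≤ n)]
      have hpow : q ^ ((n + 1 + 1) * j) = q ^ ((n + 1) * j) * q ^ j := by
        rw [← pow_add]; ring_nf
      rw [hpow]; ring
    rw [Finset.sum_range_succ, Finset.sum_congr rfl hstep, hL, hM]
    -- telescoping sum over range (n+1) = range n plus last
    have htel : ∑ j ∈ Finset.range n,
        ((1 - q ^ (n + 1)) * q ^ j - (1 + q ^ (n + 1))) * Uterm n j =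
          Wterm n n - Wterm n 0 := by
      rw [← Finset.sum_range_sub (Wterm n)]
      exact Finset.sum_congr rfl fun j hj => telescope_term (Finset.mem_range.mp hj)
    have hW0 : Wterm n 0 = 0 := by simp [Wterm]
    have hsum : ∑ j ∈ Finset.range (n + 1), ((1 - q ^ (n + 1)) * q ^ j) * Uterm n j =
        (1 + q ^ (n + 1)) * ∑ j ∈ Finset.range (n + 1), Uterm n j +
          (Wterm n n + ((1 - q ^ (n + 1)) * q ^ n - (1 + q ^ (n + 1))) * Uterm n n) := by
      have expand : ∀ j ∈ Finset.range (n + 1),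
          ((1 - q ^ (n + 1)) * q ^ j) * Uterm n j =
            (1 + q ^ (n + 1)) * Uterm n j +
              ((1 - q ^ (n + 1)) * q ^ j - (1 + q ^ (n + 1))) * Uterm n j := by
        intro j _; ring
      have hc : ∑ j ∈ Finset.range (n + 1),
          ((1 - q ^ (n + 1)) * q ^ j - (1 + q ^ (n + 1))) * Uterm n j =
            Wterm n n - Wterm n 0 +
              ((1 - q ^ (n + 1)) * q ^ n - (1 + q ^ (n + 1))) * Uterm n n := by
        rw [Finset.sum_range_succ, htel]
      rw [Finset.sum_congr rfl expand, Finset.sum_add_distrib, ← Finset.mul_sum, hc, hW0]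
      ring
    rw [hsum, ih]
    -- remaining closed-form computation
    have hWnn : Wterm n n = (1 - q ^ n) * ((-1) ^ n * Apoch n * q ^ ((n + 1) * n)) := by
      rw [Wterm, Qp_self]; ring
    have hUnn : Uterm n n = (-1) ^ n * Apoch n * q ^ ((n + 1) * n) := by
      rw [Uterm, Qp_self]; ring
    have hUlast : Uterm (n + 1) (n + 1) =
        (-1) ^ (n + 1) * (2 * Mp n) * q ^ ((n + 1 + 1) * (n + 1)) := by
      rw [Uterm, Qp_self, Apoch_eq_two_mul]; ring
    have hA : Apoch (n + 1) = Apoch n * (1 + q ^ n) := Apoch_succ n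
    have h2M : Apoch n * (1 + q ^ n) = 2 * Mp n := by rw [← hA, Apoch_eq_two_mul]
    rw [hWnn, hUnn, hUlast]
    have e1 : q ^ ((n + 1) ^ 2) = q ^ ((n + 1) * n) * q ^ (n + 1) := by
      rw [← pow_add]; ring_nf
    have e2 : q ^ ((n + 1 + 1) * (n + 1)) = q ^ ((n + 1) * n) * q ^ (n + 1) * q ^ (n + 1) := by
      rw [← pow_add, ← pow_add]; ring_nf
    rw [e1, e2]
    -- now everything is in terms of Apoch n, Mp n, and powers; use h2M
    linear_combination ((-1 : RatFunc ℚ) ^ (n + 1) * q ^ ((n + 1) * n) * q ^ (n + 1)) * h2M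

theorem gauss_finite_form (n : ℕ) :
    1 + 2 * ∑ j ∈ Finset.Icc 1 n, (-1 : RatFunc ℚ) ^ j * RatFunc.X ^ (j ^ 2) =
    ∑ j ∈ Finset.range (n + 1), (-1 : RatFunc ℚ) ^ j *
      qPoch (-1) RatFunc.X j * qPoch RatFunc.X RatFunc.X n * RatFunc.X ^ ((n + 1) * j) /
        (qPoch RatFunc.X RatFunc.X j * qPoch (-RatFunc.X) RatFunc.X n) := by
  have hsub : ∀ k : ℕ, (1 : RatFunc ℚ) - q ^ (k + 1) ≠ 0 := by
    intro k
    have hp : (1 - Polynomial.X ^ (k + 1) : Polynomial ℚ) ≠ 0 := by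
      intro h
      have h2 := congrArg (fun p => Polynomial.coeff p (k + 1)) h
      simp [Polynomial.coeff_one] at h2
    have := RatFunc.algebraMap_ne_zero hp
    simpa using this
  have hadd : ∀ k : ℕ, (1 : RatFunc ℚ) + q ^ (k + 1) ≠ 0 := by
    intro k
    have hp : (1 + Polynomial.X ^ (k + 1) : Polynomial ℚ) ≠ 0 := by
      intro h
      have h2 := congrArg (fun p => Polynomial.coeff p (k + 1)) h
      simp [Polynomial.coeff_one] at h2
    have := RatFunc.algebraMap_ne_zero hp
    simpa using this
  have hqq : ∀ m : ℕ, qPoch RatFunc.X RatFunc.X m = ∏ i ∈ Finset.range m, (1 - q ^ (i + 1)) := by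
    intro m
    unfold qPoch
    exact Finset.prod_congr rfl fun i _ => by rw [pow_succ']
  have hMp : qPoch (-RatFunc.X) RatFunc.X n = Mp n := by
    unfold qPoch Mp
    exact Finset.prod_congr rfl fun i _ => by rw [pow_succ']; ring
  have hAp : ∀ j : ℕ, qPoch (-1) RatFunc.X j = Apoch j := by
    intro j
    unfold qPoch Apoch
    exact Finset.prod_congr rfl fun i _ => by ring
  have hMne : Mp n ≠ 0 := Finset.prod_ne_zero_iff.mpr fun i _ => hadd i
  have hPne : ∀ j : ℕ, qPoch RatFunc.X RatFunc.X j ≠ 0 := by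
    intro j
    rw [hqq]
    exact Finset.prod_ne_zero_iff.mpr fun i _ => hsub i
  have hterm : ∀ j ∈ Finset.range (n + 1),
      (-1 : RatFunc ℚ) ^ j * qPoch (-1) RatFunc.X j * qPoch RatFunc.X RatFunc.X n *
          RatFunc.X ^ ((n + 1) * j) /
        (qPoch RatFunc.X RatFunc.X j * qPoch (-RatFunc.X) RatFunc.X n) =
      Uterm n j / Mp n := by
    intro j hj
    rw [Finset.mem_range] at hj
    have hsplit : qPoch RatFunc.X RatFunc.X n = qPoch RatFunc.X RatFunc.X j * Qp n j := by
      rw [hqq, hqq, Qp]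
      exact (Finset.prod_range_mul_prod_Ico _ (by omega : j ≤ n)).symm
    rw [hsplit, hMp, hAp, Uterm]
    rw [div_eq_div_iff (mul_ne_zero (hPne j) hMne) hMne]
    ring
  rw [Finset.sum_congr rfl hterm, ← Finset.sum_div, key, mul_div_assoc,
    div_self hMne, mul_one]
end

section
/- For every integer n ≥ 0, Shanks' identity holds: ∑_{j=0}^{n-1} q^{j(2j+1)} (1 + q^{2j+1}) = ∑_{j=0}^{n-1} (q;q²)_j (q²;q²)_n q^{j(2n+1)} / ((q²;q²)_j (q;q²)_n), as an identity of rational functions in q. -/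
lemma X_pow_ne_one (k : ℕ) (hk : k ≠ 0) : (RatFunc.X : RatFunc ℚ) ^ k ≠ 1 := by
  intro h
  have h2 : algebraMap (Polynomial ℚ) (RatFunc ℚ) (Polynomial.X ^ k) =
      algebraMap (Polynomial ℚ) (RatFunc ℚ) 1 := by
    simpa [map_pow, RatFunc.algebraMap_X] using h
  have h3 := RatFunc.algebraMap_injective ℚ h2
  have := congrArg Polynomial.natDegree h3
  simp [Polynomial.natDegree_X_pow] at this
  exact hk this

lemma one_sub_ne (k : ℕ) (hk : k ≠ 0) : (1 : RatFunc ℚ) - RatFunc.X ^ k ≠ 0 := by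
  rw [sub_ne_zero]
  exact fun h => X_pow_ne_one k hk h.symm

lemma qPochA_ne (m : ℕ) : qPoch RatFunc.X (RatFunc.X ^ 2) m ≠ 0 := by
  unfold qPoch
  rw [Finset.prod_ne_zero_iff]
  intro i _
  have : (RatFunc.X : RatFunc ℚ) * (RatFunc.X ^ 2) ^ i = RatFunc.X ^ (2 * i + 1) := by ring
  rw [this]
  exact one_sub_ne _ (by omega)

lemma qPochB_ne (m : ℕ) : qPoch (RatFunc.X ^ 2) (RatFunc.X ^ 2) m ≠ 0 := by
  unfold qPoch
  rw [Finset.prod_ne_zero_iff]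
  intro i _
  have : (RatFunc.X : RatFunc ℚ) ^ 2 * (RatFunc.X ^ 2) ^ i = RatFunc.X ^ (2 * i + 2) := by ring
  rw [this]
  exact one_sub_ne _ (by omega)

lemma key_alg {K : Type*} [Field K] (Aj Bj An Bn P u a x : K)
    (hBj : Bj ≠ 0) (hAn : An ≠ 0)
    (h1 : 1 - a ≠ 0) (h2 : 1 - u ^ 2 * x ^ 2 ≠ 0) :
    Aj * (Bn * (1 - a * x)) * (P * u ^ 2) / (Bj * (An * (1 - a))) =
      Aj * Bn * P / (Bj * An) +
        (Aj * (1 - u ^ 2 * x) * Bn * (P * a) * (1 - u ^ 2 * x ^ 2) /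
            (Bj * (1 - u ^ 2 * x ^ 2) * An * (1 - a)) -
          Aj * Bn * P * (1 - u ^ 2) / (Bj * An * (1 - a))) := by
  have hC : Bj * (1 - u ^ 2 * x ^ 2) * An * (1 - a) ≠ 0 :=
    mul_ne_zero (mul_ne_zero (mul_ne_zero hBj h2) hAn) h1
  have hD : Bj * An * (1 - a) ≠ 0 := mul_ne_zero (mul_ne_zero hBj hAn) h1
  have hB : Bj * An ≠ 0 := mul_ne_zero hBj hAn
  have hL : Bj * (An * (1 - a)) ≠ 0 := mul_ne_zero hBj (mul_ne_zero hAn h1)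
  rw [div_sub_div _ _ hC hD, div_add_div _ _ hB (mul_ne_zero hC hD),
    div_eq_div_iff hL (mul_ne_zero hB (mul_ne_zero hC hD))]
  ring

noncomputable def Fterm (n j : ℕ) : RatFunc ℚ :=
  qPoch RatFunc.X (RatFunc.X ^ 2) j * qPoch (RatFunc.X ^ 2) (RatFunc.X ^ 2) n *
      RatFunc.X ^ (j * (2 * n + 1)) /
    (qPoch (RatFunc.X ^ 2) (RatFunc.X ^ 2) j * qPoch RatFunc.X (RatFunc.X ^ 2) n)

noncomputable def Gterm (n j : ℕ) : RatFunc ℚ :=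
  qPoch RatFunc.X (RatFunc.X ^ 2) j * qPoch (RatFunc.X ^ 2) (RatFunc.X ^ 2) n *
      RatFunc.X ^ (j * (2 * n + 1)) * (1 - RatFunc.X ^ (2 * j)) /
    (qPoch (RatFunc.X ^ 2) (RatFunc.X ^ 2) j * qPoch RatFunc.X (RatFunc.X ^ 2) n *
      (1 - RatFunc.X ^ (2 * n + 1)))

lemma qPoch_succ (a q : RatFunc ℚ) (m : ℕ) :
    qPoch a q (m + 1) = qPoch a q m * (1 - a * q ^ m) := Finset.prod_range_succ _ _

lemma step (n j : ℕ) : Fterm (n + 1) j = Fterm n j + (Gterm n (j + 1) - Gterm n j) := by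
  unfold Fterm Gterm
  have eA : qPoch RatFunc.X (RatFunc.X ^ 2) (j + 1) =
      qPoch RatFunc.X (RatFunc.X ^ 2) j * (1 - (RatFunc.X ^ j) ^ 2 * RatFunc.X) := by
    rw [qPoch_succ]; congr 2; ring
  have eB : qPoch (RatFunc.X ^ 2) (RatFunc.X ^ 2) (j + 1) =
      qPoch (RatFunc.X ^ 2) (RatFunc.X ^ 2) j * (1 - (RatFunc.X ^ j) ^ 2 * RatFunc.X ^ 2) := by
    rw [qPoch_succ]; congr 2; ring
  have eA' : qPoch RatFunc.X (RatFunc.X ^ 2) (n + 1) =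
      qPoch RatFunc.X (RatFunc.X ^ 2) n * (1 - RatFunc.X ^ (2 * n + 1)) := by
    rw [qPoch_succ]; congr 2; ring
  have eB' : qPoch (RatFunc.X ^ 2) (RatFunc.X ^ 2) (n + 1) =
      qPoch (RatFunc.X ^ 2) (RatFunc.X ^ 2) n * (1 - RatFunc.X ^ (2 * n + 1) * RatFunc.X) := by
    rw [qPoch_succ]; congr 2; ring
  have p1 : (RatFunc.X : RatFunc ℚ) ^ (j * (2 * (n + 1) + 1)) =
      RatFunc.X ^ (j * (2 * n + 1)) * (RatFunc.X ^ j) ^ 2 := by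
    rw [← pow_mul, ← pow_add]; congr 1; ring
  have p2 : (RatFunc.X : RatFunc ℚ) ^ ((j + 1) * (2 * n + 1)) =
      RatFunc.X ^ (j * (2 * n + 1)) * RatFunc.X ^ (2 * n + 1) := by
    rw [← pow_add]; congr 1; ring
  have p3 : (RatFunc.X : RatFunc ℚ) ^ (2 * (j + 1)) =
      (RatFunc.X ^ j) ^ 2 * RatFunc.X ^ 2 := by
    rw [← pow_mul, ← pow_add]; congr 1; ring
  have p4 : (RatFunc.X : RatFunc ℚ) ^ (2 * j) = (RatFunc.X ^ j) ^ 2 := by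
    rw [← pow_mul]; congr 1; ring
  rw [eA, eB, eA', eB', p1, p2, p3, p4]
  exact key_alg _ _ _ _ _ _ _ _ (qPochB_ne j) (qPochA_ne n)
    (one_sub_ne _ (by omega)) (by
      have : (1:RatFunc ℚ) - (RatFunc.X ^ j) ^ 2 * RatFunc.X ^ 2 = 1 - RatFunc.X ^ (2*j+2) := by
        congr 1; rw [← pow_mul, ← pow_add]; congr 1; ring
      rw [this]; exact one_sub_ne _ (by omega))

lemma Fnn (n : ℕ) : Fterm n n = RatFunc.X ^ (n * (2 * n + 1)) := by
  unfold Fterm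
  rw [div_eq_iff (mul_ne_zero (qPochB_ne n) (qPochA_ne n))]
  ring

lemma G0 (n : ℕ) : Gterm n 0 = 0 := by
  unfold Gterm
  simp

lemma Gtop (n : ℕ) : Gterm n (n + 1) = RatFunc.X ^ ((n + 1) * (2 * n + 1)) := by
  unfold Gterm
  have eA : qPoch RatFunc.X (RatFunc.X ^ 2) (n + 1) =
      qPoch RatFunc.X (RatFunc.X ^ 2) n * (1 - RatFunc.X ^ (2 * n + 1)) := by
    rw [qPoch_succ]; congr 2; ring
  have eB : qPoch (RatFunc.X ^ 2) (RatFunc.X ^ 2) (n + 1) =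
      qPoch (RatFunc.X ^ 2) (RatFunc.X ^ 2) n * (1 - RatFunc.X ^ (2 * n + 2)) := by
    rw [qPoch_succ]; congr 2; ring
  have e2 : (RatFunc.X : RatFunc ℚ) ^ (2 * (n + 1)) = RatFunc.X ^ (2 * n + 2) := by
    congr 1
  rw [eA, eB, e2]
  rw [div_eq_iff (mul_ne_zero (mul_ne_zero (mul_ne_zero (qPochB_ne n)
    (one_sub_ne _ (by omega))) (qPochA_ne n)) (one_sub_ne _ (by omega)))]
  ring

theorem shanks_identity (n : ℕ) :
    (∑ j ∈ Finset.range n, RatFunc.X ^ (j * (2 * j + 1)) * (1 + RatFunc.X ^ (2 * j + 1))) =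
    ∑ j ∈ Finset.range n,
      qPoch RatFunc.X (RatFunc.X ^ 2) j * qPoch (RatFunc.X ^ 2) (RatFunc.X ^ 2) n *
          RatFunc.X ^ (j * (2 * n + 1)) /
        (qPoch (RatFunc.X ^ 2) (RatFunc.X ^ 2) j * qPoch RatFunc.X (RatFunc.X ^ 2) n) := by
  have main : ∀ m, (∑ j ∈ Finset.range m,
      RatFunc.X ^ (j * (2 * j + 1)) * (1 + RatFunc.X ^ (2 * j + 1))) =
      ∑ j ∈ Finset.range m, Fterm m j := by
    intro m
    induction m with
    | zero => simp
    | succ m ih =>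
      rw [Finset.sum_range_succ, ih]
      have : ∑ j ∈ Finset.range (m + 1), Fterm (m + 1) j =
          ∑ j ∈ Finset.range (m + 1), (Fterm m j + (Gterm m (j + 1) - Gterm m j)) := by
        exact Finset.sum_congr rfl fun j _ => step m j
      rw [this, Finset.sum_add_distrib, Finset.sum_range_sub (fun j => Gterm m j),
        Finset.sum_range_succ, Fnn, G0, Gtop]
      have hx : (RatFunc.X : RatFunc ℚ) ^ (m * (2 * m + 1)) * (1 + RatFunc.X ^ (2 * m + 1)) =
          RatFunc.X ^ (m * (2 * m + 1)) + RatFunc.X ^ ((m + 1) * (2 * m + 1)) := by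
        rw [mul_add, mul_one, ← pow_add]
        congr 2
        ring
      rw [hx]
      ring
  exact main n
end
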